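/- For any n ≥ 2 and any degrees d₁,…,dₙ ≥ 2, the composition map Φ : Poly^{mc}_{d₁} × ⋯ × Poly^{mc}_{dₙ} → Poly^{mc}_{d₁⋯dₙ}, (f₁,…,fₙ) ↦ f₁∘⋯∘fₙ, between spaces of monic centered complex polynomials, is well-defined (the composition of monic centered polynomials is monic centered) and is a proper map over ℂ (preimages of compact sets are compact). -/

import Mathlib

open Polynomial

/-- The monic centered polynomial of degree `d` with low-order coefficients `a`:
`mcPoly d a = z^d + a_{d-2} z^{d-2} + ⋯ + a_1 z + a_0` (the coefficient of
`z^{d-1}` vanishes).  This identifies the space `Poly^{mc}_d` of degree `d` monic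
centered complex polynomials with the affine space `ℂ^{d-1}`. -/
noncomputable def mcPoly (d : ℕ) (a : Fin (d - 1) → ℂ) : Polynomial ℂ :=
  X ^ d + ∑ i : Fin (d - 1), C (a i) * X ^ (i : ℕ)

/-- `p` is a monic centered polynomial of degree `d`:
`p(z) = z^d + a_{d-2} z^{d-2} + ⋯ + a_0`. -/
def MonicCentered (d : ℕ) (p : Polynomial ℂ) : Prop :=
  p.Monic ∧ p.natDegree = d ∧ p.coeff (d - 1) = 0

/-- The composition `f₁ ∘ f₂ ∘ ⋯ ∘ fₙ` of the monic centered polynomials with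
coefficient tuples `a i ∈ ℂ^{dᵢ-1}`. -/
noncomputable def mcComp (n : ℕ) (d : Fin n → ℕ)
    (a : (i : Fin n) → Fin (d i - 1) → ℂ) : Polynomial ℂ :=
  (List.ofFn fun i : Fin n => mcPoly (d i) (a i)).foldr Polynomial.comp X

lemma mcSum_coeff (d : ℕ) (a : Fin (d - 1) → ℂ) (k : ℕ) :
    (∑ i : Fin (d - 1), C (a i) * X ^ (i : ℕ)).coeff k
      = if h : k < d - 1 then a ⟨k, h⟩ else 0 := by
  rw [finset_sum_coeff]
  split_ifs with h
  · rw [Finset.sum_eq_single (⟨k, h⟩ : Fin (d - 1))]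
    · simp
    · intro b _ hb
      simp only [coeff_C_mul, coeff_X_pow]
      rw [if_neg, mul_zero]
      exact fun hkb => hb (Fin.ext hkb.symm)
    · simp
  · refine Finset.sum_eq_zero fun i _ => ?_
    simp only [coeff_C_mul, coeff_X_pow]
    rw [if_neg, mul_zero]
    intro hki
    exact h (hki ▸ i.isLt)

lemma mcPoly_coeff_lt {d k : ℕ} (a : Fin (d - 1) → ℂ) (hk : k < d - 1) :
    (mcPoly d a).coeff k = a ⟨k, hk⟩ := by
  rw [mcPoly, coeff_add, mcSum_coeff, dif_pos hk, coeff_X_pow, if_neg (by omega), zero_add]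

lemma mcPoly_coeff_ge {d k : ℕ} (a : Fin (d - 1) → ℂ) (hk : d - 1 ≤ k) :
    (mcPoly d a).coeff k = if k = d then 1 else 0 := by
  rw [mcPoly, coeff_add, mcSum_coeff, dif_neg (by omega), coeff_X_pow, add_zero]

lemma mcSum_natDegree_le (d : ℕ) (a : Fin (d - 1) → ℂ) :
    (∑ i : Fin (d - 1), C (a i) * X ^ (i : ℕ)).natDegree ≤ d - 2 := by
  refine natDegree_sum_le_of_forall_le _ _ fun i _ => ?_
  exact le_trans (natDegree_C_mul_le _ _) (by rw [natDegree_X_pow]; omega)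

lemma mcSum_degree_lt (d : ℕ) (hd : 1 ≤ d) (a : Fin (d - 1) → ℂ) :
    (∑ i : Fin (d - 1), C (a i) * X ^ (i : ℕ)).degree < (X ^ d : Polynomial ℂ).degree := by
  rw [degree_X_pow]
  calc (∑ i : Fin (d - 1), C (a i) * X ^ (i : ℕ)).degree
      ≤ ((∑ i : Fin (d - 1), C (a i) * X ^ (i : ℕ)).natDegree : WithBot ℕ) :=
        degree_le_natDegree
    _ ≤ ((d - 2 : ℕ) : WithBot ℕ) := Nat.cast_le.mpr (mcSum_natDegree_le d a)
    _ < ((d : ℕ) : WithBot ℕ) := Nat.cast_lt.mpr (by omega)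

lemma mcPoly_monic {d : ℕ} (hd : 1 ≤ d) (a : Fin (d - 1) → ℂ) : (mcPoly d a).Monic :=
  (monic_X_pow d).add_of_left (mcSum_degree_lt d hd a)

lemma mcPoly_natDegree {d : ℕ} (hd : 1 ≤ d) (a : Fin (d - 1) → ℂ) :
    (mcPoly d a).natDegree = d := by
  have := degree_add_eq_left_of_degree_lt (mcSum_degree_lt d hd a)
  rw [degree_X_pow] at this
  exact natDegree_eq_of_degree_eq_some this

lemma mcPoly_monicCentered {d : ℕ} (hd : 2 ≤ d) (a : Fin (d - 1) → ℂ) :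
    MonicCentered d (mcPoly d a) :=
  ⟨mcPoly_monic (by omega) a, mcPoly_natDegree (by omega) a, by
    rw [mcPoly_coeff_ge a le_rfl, if_neg (by omega)]⟩

lemma mcPoly_comp (d : ℕ) (a : Fin (d - 1) → ℂ) (q : Polynomial ℂ) :
    (mcPoly d a).comp q = q ^ d + ∑ i : Fin (d - 1), C (a i) * q ^ (i : ℕ) := by
  simp [mcPoly, add_comp, pow_comp, X_comp, mul_comp, C_comp, eval₂_finset_sum]

lemma mcSum_q_natDegree_le {e m : ℕ} {q : Polynomial ℂ} (hq : q.Monic) (hqd : q.natDegree = m)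
    (b : Fin (e - 1) → ℂ) :
    (∑ i : Fin (e - 1), C (b i) * q ^ (i : ℕ)).natDegree ≤ (e - 2) * m := by
  refine natDegree_sum_le_of_forall_le _ _ fun i _ => ?_
  refine le_trans (natDegree_C_mul_le _ _) ?_
  rw [hq.natDegree_pow, hqd]
  exact Nat.mul_le_mul_right _ (by omega)

lemma monicCentered_mcPoly_comp {e : ℕ} (he : 2 ≤ e) (b : Fin (e - 1) → ℂ)
    {m : ℕ} {q : Polynomial ℂ} (hq : MonicCentered m q) (hm : 1 ≤ m) :
    MonicCentered (e * m) ((mcPoly e b).comp q) := by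
  obtain ⟨hqm, hqd, hqc⟩ := hq
  rw [mcPoly_comp]
  have hkey : (e - 2) * m + 2 * m = e * m := by rw [← add_mul]; congr 1; omega
  have hqe : (q ^ e).Monic := hqm.pow e
  have hde : (q ^ e).natDegree = e * m := by rw [hqm.natDegree_pow, hqd]
  have hsd : (∑ i : Fin (e - 1), C (b i) * q ^ (i : ℕ)).natDegree ≤ (e - 2) * m :=
    mcSum_q_natDegree_le hqm hqd b
  have hslt : (∑ i : Fin (e - 1), C (b i) * q ^ (i : ℕ)).natDegree < e * m - 1 := by omega
  have hdeglt : (∑ i : Fin (e - 1), C (b i) * q ^ (i : ℕ)).degree < (q ^ e).degree := by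
    rw [degree_eq_natDegree hqe.ne_zero, hde]
    calc (∑ i : Fin (e - 1), C (b i) * q ^ (i : ℕ)).degree
        ≤ ((∑ i : Fin (e - 1), C (b i) * q ^ (i : ℕ)).natDegree : WithBot ℕ) :=
          degree_le_natDegree
      _ < ((e * m : ℕ) : WithBot ℕ) := Nat.cast_lt.mpr (by omega)
  refine ⟨hqe.add_of_left hdeglt, ?_, ?_⟩
  · exact natDegree_eq_of_degree_eq_some
      ((degree_add_eq_left_of_degree_lt hdeglt).trans (by rw [degree_eq_natDegree hqe.ne_zero, hde]))
  · rw [coeff_add, coeff_eq_zero_of_natDegree_lt hslt, add_zero]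
    have h1 : (q ^ e).coeff (e * m - 1) = (q ^ e).nextCoeff := by
      rw [nextCoeff_of_natDegree_pos (by rw [hde]; positivity), hde]
    rw [h1, hqm.nextCoeff_pow, nextCoeff_of_natDegree_pos (by omega), hqd, hqc, smul_zero]

lemma mcComp_zero (d : Fin 0 → ℕ) (a : (i : Fin 0) → Fin (d i - 1) → ℂ) :
    mcComp 0 d a = X := by simp [mcComp]

lemma mcComp_succ (n : ℕ) (d : Fin (n + 1) → ℕ) (a : (i : Fin (n + 1)) → Fin (d i - 1) → ℂ) :
    mcComp (n + 1) d a
      = (mcPoly (d 0) (a 0)).comp (mcComp n (fun i => d i.succ) (fun i => a i.succ)) := by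
  simp [mcComp, List.ofFn_succ]

lemma monicCentered_mcComp :
    ∀ (n : ℕ) (d : Fin n → ℕ), (∀ i, 2 ≤ d i) →
      ∀ a : (i : Fin n) → Fin (d i - 1) → ℂ, MonicCentered (∏ i, d i) (mcComp n d a) := by
  intro n
  induction n with
  | zero =>
    intro d _ a
    rw [mcComp_zero]
    exact ⟨monic_X, by simp, by simp⟩
  | succ n ih =>
    intro d hd a
    rw [mcComp_succ, Fin.prod_univ_succ]
    have hm : 1 ≤ ∏ i : Fin n, d i.succ :=
      Finset.one_le_prod' fun i _ => by have := hd i.succ; omega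
    exact monicCentered_mcPoly_comp (hd 0) (a 0) (ih _ (fun i => hd i.succ) _) hm

lemma continuous_coeff_pow {α : Type*} [TopologicalSpace α] {F : α → Polynomial ℂ}
    (h : ∀ k, Continuous fun x => (F x).coeff k) (m : ℕ) :
    ∀ k, Continuous fun x => ((F x) ^ m).coeff k := by
  induction m with
  | zero => intro k; simp only [pow_zero, coeff_one]; exact continuous_const
  | succ m ih =>
    intro k
    simp only [pow_succ, coeff_mul]
    exact continuous_finset_sum _ fun p _ => (ih p.1).mul (h p.2)

lemma continuous_mcComp_coeff :
    ∀ (n : ℕ) (d : Fin n → ℕ) (k : ℕ),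
      Continuous fun a : (i : Fin n) → Fin (d i - 1) → ℂ => (mcComp n d a).coeff k := by
  intro n
  induction n with
  | zero =>
    intro d k
    simp only [mcComp_zero]
    exact continuous_const
  | succ n ih =>
    intro d k
    have hρ : Continuous fun a : (i : Fin (n + 1)) → Fin (d i - 1) → ℂ =>
        (fun i : Fin n => a i.succ) := continuous_pi fun i => continuous_apply i.succ
    have hg : ∀ k, Continuous fun a : (i : Fin (n + 1)) → Fin (d i - 1) → ℂ =>
        (mcComp n (fun i => d i.succ) (fun i => a i.succ)).coeff k :=
      fun k => (ih (fun i => d i.succ) k).comp hρ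
    simp only [mcComp_succ, mcPoly_comp, coeff_add, finset_sum_coeff, coeff_C_mul]
    refine ((continuous_coeff_pow hg (d 0)) k).add ?_
    refine continuous_finset_sum _ fun i _ => Continuous.mul ?_ (continuous_coeff_pow hg _ k)
    exact (continuous_apply i).comp (continuous_apply (0 : Fin (n + 1)))

lemma roots_norm_le {p : Polynomial ℂ} (hp : p.Monic) {M : ℝ} (h : ∀ k, ‖p.coeff k‖ ≤ M) :
    ∀ z ∈ p.roots, ‖z‖ ≤ M + 1 := by
  have hM : 0 ≤ M := le_trans (norm_nonneg _) (h 0)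
  intro z hz
  have hz' : p.IsRoot z := isRoot_of_mem_roots hz
  have hlt := IsRoot.norm_lt_cauchyBound hp.ne_zero hz'
  have hcb : p.cauchyBound ≤ M.toNNReal + 1 := by
    rw [cauchyBound, Monic.leadingCoeff hp, nnnorm_one, div_one]
    refine add_le_add_left (Finset.sup_le fun k _ => ?_) 1
    rw [← NNReal.coe_le_coe, coe_nnnorm, Real.coe_toNNReal M hM]
    exact h k
  have hfin := lt_of_lt_of_le hlt hcb
  rw [← NNReal.coe_lt_coe] at hfin
  push_cast at hfin
  rw [Real.coe_toNNReal M hM] at hfin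
  linarith

lemma coeff_norm_le {p : Polynomial ℂ} (hp : p.Monic) {m : ℕ} (hdeg : p.natDegree = m) {B : ℝ}
    (h : ∀ z ∈ p.roots, ‖z‖ ≤ B) (i : ℕ) :
    ‖p.coeff i‖ ≤ max B 1 ^ m * (m.choose (m / 2)) := by
  have := Polynomial.coeff_bdd_of_roots_le (RingHom.id ℂ) hp (by simpa using IsAlgClosed.splits p)
    (le_of_eq hdeg) (by simpa [map_id] using h) i
  simpa [map_id] using this

lemma mcComp_coeff_bound :
    ∀ (n : ℕ) (d : Fin n → ℕ), (∀ i, 2 ≤ d i) → ∀ M : ℝ, ∃ M' : ℝ,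
      ∀ a : (i : Fin n) → Fin (d i - 1) → ℂ,
        (∀ k, ‖(mcComp n d a).coeff k‖ ≤ M) → ∀ i j, ‖a i j‖ ≤ M' := by
  intro n
  induction n with
  | zero => exact fun d _ M => ⟨0, fun a _ i => i.elim0⟩
  | succ n ih =>
    intro d hd M
    set e := d 0 with he_def
    set dg := ∏ i : Fin n, d i.succ with hdg_def
    have he : 2 ≤ e := hd 0
    have hdg : 1 ≤ dg := Finset.one_le_prod' fun i _ => by have := hd i.succ; omega
    set R : ℝ := M + 1 with hR_def
    set M₁ : ℝ := max R 1 ^ dg * (dg.choose (dg / 2)) with hM₁_def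
    set S : ℝ := dg * (max M₁ 1 * max R 1 ^ dg) with hS_def
    set M₂ : ℝ := max (S + S) 1 ^ e * (e.choose (e / 2)) with hM₂_def
    obtain ⟨M₃, hM₃⟩ := ih (fun i => d i.succ) (fun i => hd i.succ) S
    refine ⟨max M₂ M₃, ?_⟩
    intro a hcoef
    set g := mcComp n (fun i => d i.succ) (fun i => a i.succ) with hg_def
    set f := mcPoly e (a 0) with hf_def
    have hpe : mcComp (n+1) d a = f.comp g := mcComp_succ n d a
    have hgMC : MonicCentered dg g := monicCentered_mcComp n _ (fun i => hd i.succ) _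
    have hfMC : MonicCentered e f := mcPoly_monicCentered he (a 0)
    have hpMC : MonicCentered (e * dg) (f.comp g) := monicCentered_mcPoly_comp he (a 0) hgMC hdg
    have hproots : ∀ z ∈ (f.comp g).roots, ‖z‖ ≤ R :=
      roots_norm_le hpMC.1 (M := M) (fun k => by rw [← hpe]; exact hcoef k)
    have hdvd : ∀ β : ℂ, f.IsRoot β → (g - C β) ∣ f.comp g := by
      intro β hβ
      obtain ⟨h', hh'⟩ := (dvd_iff_isRoot).mpr hβ
      rw [hh', mul_comp, sub_comp, X_comp, C_comp]
      exact Dvd.intro _ rfl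
    have hdgpos : (0 : WithBot ℕ) < (dg : WithBot ℕ) := by exact_mod_cast (by omega : 0 < dg)
    have hgb_monic : ∀ β : ℂ, (g - C β).Monic := by
      intro β
      rw [sub_eq_add_neg]
      refine hgMC.1.add_of_left ?_
      rw [degree_eq_natDegree hgMC.1.ne_zero, hgMC.2.1]
      exact lt_of_le_of_lt (le_trans (le_of_eq (degree_neg (C β))) degree_C_le) hdgpos
    have hgb_deg : ∀ β : ℂ, (g - C β).natDegree = dg := fun β => by
      rw [natDegree_sub_C, hgMC.2.1]
    have hgbroots : ∀ β : ℂ, f.IsRoot β → ∀ z ∈ (g - C β).roots, ‖z‖ ≤ R := fun β hβ z hz =>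
      hproots z (Multiset.mem_of_le (roots.le_of_dvd hpMC.1.ne_zero (hdvd β hβ)) hz)
    have hgbcoeff : ∀ β : ℂ, f.IsRoot β → ∀ i, ‖(g - C β).coeff i‖ ≤ M₁ := fun β hβ i =>
      coeff_norm_le (hgb_monic β) (hgb_deg β) (hgbroots β hβ) i
    obtain ⟨β₀, hβ₀⟩ := Complex.exists_root (f := f)
      (by rw [degree_eq_natDegree hfMC.1.ne_zero, hfMC.2.1]
          exact_mod_cast (by omega : 0 < e))
    have hgcoeff1 : ∀ i, 1 ≤ i → ‖g.coeff i‖ ≤ M₁ := by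
      intro i hi
      have h1 := hgbcoeff β₀ hβ₀ i
      rwa [coeff_sub, coeff_C, if_neg (by omega), sub_zero] at h1
    have hmax1 : (1:ℝ) ≤ max R 1 ^ dg := one_le_pow₀ (le_max_right R 1)
    have hM₁S : M₁ ≤ S := by
      have h1 : M₁ ≤ max M₁ 1 := le_max_left _ _
      have h2 : max M₁ 1 ≤ max M₁ 1 * max R 1 ^ dg :=
        le_mul_of_one_le_right (le_trans zero_le_one (le_max_right _ _)) hmax1
      have h3 : max M₁ 1 * max R 1 ^ dg ≤ dg * (max M₁ 1 * max R 1 ^ dg) := by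
        refine le_mul_of_one_le_left ?_ (by exact_mod_cast hdg)
        positivity
      linarith
    have heval : ∀ β : ℂ, f.IsRoot β → ‖β - g.coeff 0‖ ≤ S := by
      intro β hβ
      have h0lt : 0 < (g - C β).degree := by
        rw [degree_eq_natDegree (hgb_monic β).ne_zero, hgb_deg]; exact hdgpos
      obtain ⟨z, hz⟩ := Complex.exists_root h0lt
      have hzroots : z ∈ (g - C β).roots := mem_roots'.mpr ⟨(hgb_monic β).ne_zero, hz⟩
      have hzR : ‖z‖ ≤ R := hgbroots β hβ z hzroots
      have hzR' : 0 ≤ ‖z‖ := norm_nonneg z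
      have hgz : g.eval z = β := by
        have := hz
        rw [IsRoot.def, eval_sub, eval_C, sub_eq_zero] at this
        exact this
      have hev : g.eval z = ∑ i ∈ Finset.range (dg + 1), g.coeff i * z ^ i := by
        have := eval_eq_sum_range (p := g) z
        rwa [hgMC.2.1] at this
      have hsplit : g.eval z
          = (∑ i ∈ Finset.range dg, g.coeff (i+1) * z ^ (i+1)) + g.coeff 0 * z ^ 0 := by
        rw [hev, Finset.sum_range_succ']
      have hkey : β - g.coeff 0 = ∑ i ∈ Finset.range dg, g.coeff (i+1) * z ^ (i+1) := by
        rw [← hgz, hsplit, pow_zero, mul_one, add_sub_cancel_right]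
      rw [hkey]
      calc ‖∑ i ∈ Finset.range dg, g.coeff (i+1) * z ^ (i+1)‖
          ≤ ∑ i ∈ Finset.range dg, ‖g.coeff (i+1) * z ^ (i+1)‖ := norm_sum_le _ _
        _ ≤ ∑ _i ∈ Finset.range dg, max M₁ 1 * max R 1 ^ dg := by
            refine Finset.sum_le_sum fun i hi => ?_
            rw [norm_mul, norm_pow]
            have hc : ‖g.coeff (i+1)‖ ≤ max M₁ 1 :=
              le_trans (hgcoeff1 (i+1) (by omega)) (le_max_left _ _)
            have hz1 : ‖z‖ ^ (i+1) ≤ max R 1 ^ (i+1) :=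
              pow_le_pow_left₀ hzR' (le_trans hzR (le_max_left _ _)) _
            have hz2 : max R 1 ^ (i+1) ≤ max R 1 ^ dg :=
              pow_le_pow_right₀ (le_max_right _ _) (Nat.succ_le_of_lt (Finset.mem_range.mp hi))
            refine mul_le_mul hc (le_trans hz1 hz2) (by positivity) (by positivity)
        _ = S := by rw [Finset.sum_const, Finset.card_range, nsmul_eq_mul, hS_def]
    have hsplits : Splits f := IsAlgClosed.splits f
    have hfnd : 0 < f.natDegree := by rw [hfMC.2.1]; omega
    have hsum : f.roots.sum = 0 := by
      have h1 := hsplits.nextCoeff_eq_neg_sum_roots_of_monic hfMC.1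
      have hnc : f.nextCoeff = 0 := by
        rw [nextCoeff_of_natDegree_pos hfnd, hfMC.2.1]; exact hfMC.2.2
      rw [hnc] at h1
      exact neg_eq_zero.mp h1.symm
    have hcard : f.roots.card = e := by
      have hcr := splits_iff_card_roots.mp hsplits
      rw [hfMC.2.1] at hcr
      exact hcr
    have h0 : ‖g.coeff 0‖ ≤ S := by
      have hkey : (f.roots.map fun β => g.coeff 0 - β).sum = (e : ℂ) * g.coeff 0 := by
        simp only [sub_eq_add_neg, Multiset.sum_map_add]
        simp [Multiset.sum_map_neg', hsum, hcard, nsmul_eq_mul]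
      have hb : ‖(f.roots.map fun β => g.coeff 0 - β).sum‖ ≤ e * S := by
        refine le_trans (norm_multiset_sum_le _) ?_
        have hle := Multiset.sum_le_card_nsmul ((f.roots.map fun β => g.coeff 0 - β).map norm) S ?_
        · rw [Multiset.card_map, Multiset.card_map, hcard, nsmul_eq_mul] at hle
          exact hle
        · intro x hx
          obtain ⟨y, hy, rfl⟩ := Multiset.mem_map.mp hx
          obtain ⟨β, hβ, rfl⟩ := Multiset.mem_map.mp hy
          rw [norm_sub_rev]
          exact heval β (isRoot_of_mem_roots hβ)
      rw [hkey, norm_mul, Complex.norm_natCast] at hb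
      have hepos : (0:ℝ) < e := by exact_mod_cast (by omega : 0 < e)
      exact le_of_mul_le_mul_left hb hepos
    have hfroots : ∀ β ∈ f.roots, ‖β‖ ≤ S + S := by
      intro β hβ
      calc ‖β‖ = ‖(β - g.coeff 0) + g.coeff 0‖ := by rw [sub_add_cancel]
        _ ≤ ‖β - g.coeff 0‖ + ‖g.coeff 0‖ := norm_add_le _ _
        _ ≤ S + S := add_le_add (heval β (isRoot_of_mem_roots hβ)) h0
    have hfcoeff : ∀ i, ‖f.coeff i‖ ≤ M₂ := fun i => coeff_norm_le hfMC.1 hfMC.2.1 hfroots i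
    have hgS : ∀ k, ‖g.coeff k‖ ≤ S := by
      intro k
      cases k with
      | zero => exact h0
      | succ k => exact le_trans (hgcoeff1 (k+1) (by omega)) hM₁S
    have htail := hM₃ (fun i => a i.succ) hgS
    intro i
    refine Fin.cases ?_ ?_ i
    · intro j
      have hj : f.coeff j = a 0 j := by
        rw [hf_def, mcPoly_coeff_lt (a 0) j.isLt]
      rw [← hj]
      exact le_trans (hfcoeff j) (le_max_left _ _)
    · intro i j
      exact le_trans (htail i j) (le_max_right _ _)

/-- **Lemma (properness of the composition map on monic centered polynomials)**.
For any `n ≥ 2` and degrees `d₁, …, dₙ ≥ 2`, the composition map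
`Φ : Poly^{mc}_{d₁} × ⋯ × Poly^{mc}_{dₙ} → Poly^{mc}_{d₁⋯dₙ}`,
`(f₁,…,fₙ) ↦ f₁ ∘ ⋯ ∘ fₙ`, is well defined (the composition of monic centered
polynomials is monic centered of degree `d₁⋯dₙ`) and proper over `ℂ` (identifying
`Poly^{mc}_d` with the coefficient space `ℂ^{d-1}`). -/
theorem composition_of_monic_centered_wellDefined_and_proper
    (n : ℕ) (hn : 2 ≤ n) (d : Fin n → ℕ) (hd : ∀ i, 2 ≤ d i) :
    (∀ a : (i : Fin n) → Fin (d i - 1) → ℂ,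
      MonicCentered (∏ i, d i) (mcComp n d a)) ∧
    ∃ Φ : ((i : Fin n) → Fin (d i - 1) → ℂ) → (Fin ((∏ i, d i) - 1) → ℂ),
      (∀ a, mcPoly (∏ i, d i) (Φ a) = mcComp n d a) ∧ IsProperMap Φ := by
  set D := ∏ i, d i with hD_def
  have hD2 : 2 ≤ D := by
    have i0 : Fin n := ⟨0, by omega⟩
    calc 2 ≤ d i0 := hd i0
      _ ≤ D := Finset.single_le_prod' (fun i _ => by have := hd i; omega) (Finset.mem_univ i0)
  have part1 := monicCentered_mcComp n d hd
  have hcont : Continuous fun a : (i : Fin n) → Fin (d i - 1) → ℂ =>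
      (fun j : Fin (D - 1) => (mcComp n d a).coeff j) :=
    continuous_pi fun j => continuous_mcComp_coeff n d j
  refine ⟨part1, ⟨fun a j => (mcComp n d a).coeff j, ?_, ?_⟩⟩
  · intro a
    obtain ⟨hm, hdeg, hc⟩ := part1 a
    rw [← hD_def] at hdeg hc
    ext k
    by_cases hk : k < D - 1
    · rw [mcPoly_coeff_lt _ hk]
    · rw [mcPoly_coeff_ge _ (by omega)]
      by_cases hkD : k = D
      · rw [if_pos hkD, hkD, ← hdeg]
        exact hm.coeff_natDegree.symm
      · rw [if_neg hkD]
        rcases lt_or_ge k D with h | h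
        · have hkk : k = D - 1 := by omega
          rw [hkk]
          exact hc.symm
        · exact (coeff_eq_zero_of_natDegree_lt (by rw [hdeg]; omega)).symm
  · rw [isProperMap_iff_isCompact_preimage]
    refine ⟨hcont, ?_⟩
    intro K hK
    obtain ⟨r, hr⟩ := hK.isBounded.subset_closedBall 0
    obtain ⟨M', hM'⟩ := mcComp_coeff_bound n d hd (max r 1)
    refine IsCompact.of_isClosed_subset
      (isCompact_univ_pi fun i => isCompact_univ_pi fun j => isCompact_closedBall (0:ℂ) M')
      (hK.isClosed.preimage hcont) ?_
    intro a ha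
    have hball := hr ha
    rw [Metric.mem_closedBall, dist_zero_right] at hball
    have hcoords : ∀ j : Fin (D - 1), ‖(mcComp n d a).coeff j‖ ≤ r := fun j =>
      le_trans (norm_le_pi_norm (fun j : Fin (D - 1) => (mcComp n d a).coeff j) j) hball
    have hcoef : ∀ k, ‖(mcComp n d a).coeff k‖ ≤ max r 1 := by
      intro k
      obtain ⟨hm, hdeg, hc⟩ := part1 a
      rw [← hD_def] at hdeg hc
      by_cases hk : k < D - 1
      · exact le_trans (hcoords ⟨k, hk⟩) (le_max_left _ _)
      · by_cases hkD : k = D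
        · rw [hkD, ← hdeg, hm.coeff_natDegree, norm_one]
          exact le_max_right _ _
        · rcases lt_or_ge k D with h | h
          · have hkk : k = D - 1 := by omega
            rw [hkk, hc, norm_zero]
            exact le_trans zero_le_one (le_max_right _ _)
          · rw [coeff_eq_zero_of_natDegree_lt (by rw [hdeg]; omega), norm_zero]
            exact le_trans zero_le_one (le_max_right _ _)
    have hbnd := hM' a hcoef
    simp only [Set.mem_univ_pi, Metric.mem_closedBall, dist_zero_right]
    exact fun i j => hbnd i j
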